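/- arXiv:0904.0041 — 4 statements merged into one kernel-verified Lean document; each statement's English description precedes it below -/
import Mathlib

section
/- Let V be a finite-dimensional real vector space and let Δ ⊆ V ∖ {0} satisfy Δ = −Δ. Let P ⊆ Δ be a strongly parabolic subset. Then P ∖ (−P) is an ideal of P: if α ∈ P ∖ (−P) and β ∈ P with α + β ∈ Δ, then α + β ∈ P ∖ (−P). -/
/-- A subset `P` of `Δ` is *strongly parabolic* if `P = Δ`, or
`P = P⁰ ⊔ Δ⁺` for some triangular decomposition of `Δ` given by a linear
functional `l` (with `Δ⁰ = Δ ∩ ker l`, `Δ⁺ = {α ∈ Δ | l α > 0}`) and some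
strongly parabolic subset `P⁰` of `Δ⁰`. -/
inductive IsStronglyParabolicIn {V : Type*} [AddCommGroup V] [Module ℝ V] :
    Set V → Set V → Prop
  | all (Δ : Set V) : IsStronglyParabolicIn Δ Δ
  | step (Δ : Set V) (l : V →ₗ[ℝ] ℝ) (P₀ : Set V)
      (h : IsStronglyParabolicIn {α ∈ Δ | l α = 0} P₀) :
      IsStronglyParabolicIn Δ (P₀ ∪ {α ∈ Δ | 0 < l α})

lemma IsStronglyParabolicIn.subset {V : Type*} [AddCommGroup V] [Module ℝ V]
    {Δ P : Set V} (h : IsStronglyParabolicIn Δ P) : P ⊆ Δ := by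
  induction h with
  | all Δ => exact subset_rfl
  | step Δ l P₀ h ih =>
      rintro x (hx | hx)
      · exact (ih hx).1
      · exact hx.1

lemma strongly_parabolic_ideal_aux
    {V : Type*} [AddCommGroup V] [Module ℝ V]
    {Δ P : Set V} (hP : IsStronglyParabolicIn Δ P) :
    Δ = -Δ →
    ∀ α ∈ P \ (-P), ∀ β ∈ P, α + β ∈ Δ → α + β ∈ P \ (-P) := by
  induction hP with
  | all Δ =>
      intro hsym α hα
      exact absurd hα.1 (fun hc => hα.2 (by rw [hsym] at hc; simpa using hc))
  | step Δ l P₀ h ih =>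
      intro hsym
      have hsym0 : {α ∈ Δ | l α = 0} = -{α ∈ Δ | l α = 0} := by
        ext x
        simp only [Set.mem_neg, Set.mem_setOf_eq, map_neg, neg_eq_zero]
        constructor
        · rintro ⟨hx, hlx⟩; exact ⟨by rw [hsym]; simpa using hx, hlx⟩
        · rintro ⟨hx, hlx⟩; rw [hsym]; exact ⟨by simpa using hx, hlx⟩
      have ih := ih hsym0
      have hsub := h.subset
      rintro α ⟨hα, hαn⟩ β hβ hs
      have hαn' : -α ∉ P₀ ∪ {γ ∈ Δ | 0 < l γ} := hαn
      rcases hα with hα0 | hαp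
      · -- α ∈ P₀, so l α = 0
        have hlα : l α = 0 := (hsub hα0).2
        have hαnP₀ : -α ∉ P₀ := fun hc => hαn' (Or.inl hc)
        rcases hβ with hβ0 | hβp
        · -- both in P₀
          have hlβ : l β = 0 := (hsub hβ0).2
          have hsΔ0 : α + β ∈ {γ ∈ Δ | l γ = 0} := ⟨hs, by simp [hlα, hlβ]⟩
          have := ih α ⟨hα0, fun hc => hαnP₀ hc⟩ β hβ0 hsΔ0
          refine ⟨Or.inl this.1, ?_⟩
          rintro (hc | hc)
          · exact this.2 hc
          · have : l (-(α + β)) = 0 := by simp [map_add, hlα, hlβ]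
            exact absurd hc.2 (by rw [this]; exact lt_irrefl 0)
        · -- β ∈ Δ⁺
          have hlβ : 0 < l β := hβp.2
          have hls : 0 < l (α + β) := by simp [map_add, hlα, hlβ]
          refine ⟨Or.inr ⟨hs, hls⟩, ?_⟩
          rintro (hc | hc)
          · have := (hsub hc).2
            simp only [map_neg, neg_eq_zero] at this
            exact absurd this (ne_of_gt hls)
          · have := hc.2
            simp only [map_neg] at this
            linarith
      · -- α ∈ Δ⁺
        have hlα : 0 < l α := hαp.2
        have hlβ : 0 ≤ l β := by
          rcases hβ with hβ0 | hβp
          · exact le_of_eq ((hsub hβ0).2).symm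
          · exact le_of_lt hβp.2
        have hls : 0 < l (α + β) := by simp only [map_add]; linarith
        refine ⟨Or.inr ⟨hs, hls⟩, ?_⟩
        rintro (hc | hc)
        · have := (hsub hc).2
          simp only [map_neg, neg_eq_zero] at this
          exact absurd this (ne_of_gt hls)
        · have := hc.2
          simp only [map_neg] at this
          linarith

/-- If `Δ = −Δ`, `Δ ⊆ V ∖ {0}` and `P` is a strongly parabolic subset of `Δ`,
then `P ∖ (−P)` is an ideal of `P`: if `α ∈ P ∖ (−P)` and `β ∈ P` with
`α + β ∈ Δ`, then `α + β ∈ P ∖ (−P)`. -/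
theorem strongly_parabolic_ideal
    {V : Type*} [AddCommGroup V] [Module ℝ V] [FiniteDimensional ℝ V]
    (Δ P : Set V) (h0 : (0 : V) ∉ Δ) (hsym : Δ = -Δ)
    (hP : IsStronglyParabolicIn Δ P) :
    ∀ α ∈ P \ (-P), ∀ β ∈ P, α + β ∈ Δ → α + β ∈ P \ (-P) := by
  intro α hα β hβ hs
  exact strongly_parabolic_ideal_aux hP hsym α hα β hβ hs
end

section
/- Let R be an irreducible finite reduced crystallographic root system spanning W, let n ≥ 1, V = W × ℝⁿ, and Δ = {(α, γ) : α ∈ R, γ ∈ ℤⁿ} ∪ {(0, γ) : γ ∈ ℤⁿ ∖ {0}}. If P is a parabolic subset of Δ, then S = {α ∈ R : (α, γ) ∈ P for some γ ∈ ℤⁿ} is a parabolic subset of R. -/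
/-- A subset `P` of `Δ` is *parabolic* if `P ∪ (−P) = Δ` and `P` is closed. -/
def IsParabolicIn {V : Type*} [AddCommGroup V] (Δ P : Set V) : Prop :=
  P ∪ (-P) = Δ ∧ ∀ α ∈ P, ∀ β ∈ P, α + β ∈ Δ → α + β ∈ P

/-- `P` is *principal parabolic* in `Δ` if `P = {α ∈ Δ | λ α ≥ 0}`. -/
def IsPrincipalParabolicIn {V : Type*} [AddCommGroup V] [Module ℝ V] (Δ P : Set V) : Prop :=
  ∃ l : V →ₗ[ℝ] ℝ, P = {α ∈ Δ | 0 ≤ l α}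

/-- A finite reduced crystallographic root system in a real inner product space. -/
structure IsRootSystem {W : Type*} [NormedAddCommGroup W] [InnerProductSpace ℝ W]
    (R : Set W) : Prop where
  finite : R.Finite
  nonzero : (0 : W) ∉ R
  reflection_mem : ∀ α ∈ R, ∀ β ∈ R,
    β - (2 * (inner ℝ β α : ℝ) / (inner ℝ α α : ℝ)) • α ∈ R
  crystallographic : ∀ α ∈ R, ∀ β ∈ R,
    ∃ n : ℤ, (n : ℝ) * (inner ℝ β β : ℝ) = 2 * (inner ℝ α β : ℝ)
  reduced : ∀ α ∈ R, ∀ t : ℝ, t • α ∈ R → t = 1 ∨ t = -1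

/-- A root system is irreducible if it is not the union of two nonempty mutually
orthogonal subsystems. -/
def IsIrreducibleRootSystem {W : Type*} [NormedAddCommGroup W] [InnerProductSpace ℝ W]
    (R : Set W) : Prop :=
  ¬ ∃ R₁ R₂ : Set W, R₁.Nonempty ∧ R₂.Nonempty ∧ R = R₁ ∪ R₂ ∧
      ∀ α ∈ R₁, ∀ β ∈ R₂, (inner ℝ α β : ℝ) = 0

/-- `γ ∈ ℝⁿ` is an integer vector, i.e. lies in `ℤⁿ`. -/
def IsIntVec {n : ℕ} (γ : Fin n → ℝ) : Prop := ∀ i, ∃ k : ℤ, γ i = (k : ℝ)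

/-- The toroidal root system `Δ = (R + Γ) ∪ (Γ ∖ {0})`, `Γ = ℤⁿ`, realized in
`V = W × ℝⁿ`. -/
def ToroidalDelta {W : Type*} [NormedAddCommGroup W] [InnerProductSpace ℝ W]
    (R : Set W) (n : ℕ) : Set (W × (Fin n → ℝ)) :=
  {v | (v.1 ∈ R ∧ IsIntVec v.2) ∨ (v.1 = 0 ∧ IsIntVec v.2 ∧ v.2 ≠ 0)}

/-- If `P` is a parabolic subset of the toroidal root system, then
`S = {α ∈ R : (α, γ) ∈ P for some γ ∈ ℤⁿ}` is a parabolic subset of `R`. -/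
theorem toroidal_parabolic_projection_parabolic
    {W : Type*} [NormedAddCommGroup W] [InnerProductSpace ℝ W]
    [FiniteDimensional ℝ W] (R : Set W) (hR : IsRootSystem R)
    (hirr : IsIrreducibleRootSystem R) (hspan : Submodule.span ℝ R = ⊤)
    (n : ℕ) (hn : 1 ≤ n)
    (P : Set (W × (Fin n → ℝ))) (hP : IsParabolicIn (ToroidalDelta R n) P) :
    IsParabolicIn R {α | α ∈ R ∧ ∃ γ : Fin n → ℝ, IsIntVec γ ∧ (α, γ) ∈ P} := by
  have hneg : ∀ α ∈ R, -α ∈ R := by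
    intro α hα
    have h := hR.reflection_mem α hα α hα
    have hα0 : α ≠ 0 := fun h0 => hR.nonzero (h0 ▸ hα)
    have hin : (inner ℝ α α : ℝ) ≠ 0 := by
      exact fun h => hα0 (by simpa [real_inner_self_eq_norm_sq, pow_eq_zero_iff] using h)
    have : (2 * (inner ℝ α α : ℝ) / (inner ℝ α α : ℝ)) = 2 := by
      field_simp
    rw [this] at h
    have : α - (2 : ℝ) • α = -α := by
      rw [two_smul]; abel
    rwa [this] at h
  have hzero : IsIntVec (0 : Fin n → ℝ) := fun i => ⟨0, by simp⟩
  constructor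
  · ext α
    constructor
    · rintro (⟨hα, -⟩ | hα)
      · exact hα
      · obtain ⟨hmα, -⟩ := hα
        simpa using hneg _ hmα
    · intro hα
      have hΔ : (α, (0 : Fin n → ℝ)) ∈ ToroidalDelta R n := Or.inl ⟨hα, hzero⟩
      rw [← hP.1] at hΔ
      rcases hΔ with h | h
      · exact Or.inl ⟨hα, 0, hzero, h⟩
      · refine Or.inr ?_
        have : (-α, (0 : Fin n → ℝ)) ∈ P := by
          simpa [Prod.neg_mk] using h
        exact ⟨hneg _ hα, 0, hzero, this⟩
  · rintro α ⟨hαR, γ, hγ, hαγ⟩ β ⟨hβR, δ, hδ, hβδ⟩ hsum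
    have hγδ : IsIntVec (γ + δ) := by
      intro i
      obtain ⟨k, hk⟩ := hγ i
      obtain ⟨m, hm⟩ := hδ i
      exact ⟨k + m, by push_cast [Pi.add_apply, hk, hm]; ring⟩
    have hΔ : ((α, γ) + (β, δ)) ∈ ToroidalDelta R n := Or.inl ⟨hsum, hγδ⟩
    have := hP.2 _ hαγ _ hβδ hΔ
    exact ⟨hsum, γ + δ, hγδ, this⟩
end

section
/- Let n ≥ 1 and let T ⊆ ℤⁿ ∖ {0} satisfy T ∪ (−T) = ℤⁿ ∖ {0} and be closed under addition within ℤⁿ ∖ {0} (i.e. γ, γ' ∈ T with γ + γ' ≠ 0 implies γ + γ' ∈ T). If T is a proper subset of ℤⁿ ∖ {0}, then there exists a nonzero linear functional λ on ℝⁿ such that λ(γ) ≥ 0 for every γ ∈ T. -/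
lemma PPL.multiset_sum_mem {n : ℕ} {T : Set (Fin n → ℝ)}
    (hclosed : ∀ γ ∈ T, ∀ γ' ∈ T, γ + γ' ≠ 0 → γ + γ' ∈ T)
    (M : Multiset (Fin n → ℝ)) (hM : ∀ x ∈ M, x ∈ T) (hs : M.sum ≠ 0) : M.sum ∈ T := by
  classical
  induction M using Multiset.strongInductionOn with
  | _ M ih =>
    rcases Multiset.empty_or_exists_mem M with rfl | ⟨x, hx⟩
    · simp at hs
    by_cases hone : M.sum - x = 0
    · have : M.sum = x := by rw [sub_eq_zero] at hone; exact hone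
      rw [this]; exact hM x hx
    · have hins : x ::ₘ M.erase x = M := Multiset.cons_erase hx
      have hsum : M.sum = x + (M.erase x).sum := by
        conv_lhs => rw [← hins]
        rw [Multiset.sum_cons]
      have hsum' : (M.erase x).sum = M.sum - x := by rw [hsum]; abel
      have hTs : (M.erase x).sum ∈ T :=
        ih (M.erase x) (Multiset.erase_lt.2 hx)
          (fun z hz => hM z (Multiset.mem_of_mem_erase hz)) (by rw [hsum']; exact hone)
      have := hclosed x (hM x hx) _ hTs (by rw [← hsum]; exact hs)
      rwa [← hsum] at this


lemma PPL.exists_nat_combination {n : ℕ} {ι : Type} (t : Finset ι)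
    (c : ι → ℝ) (hc : ∀ i ∈ t, 0 ≤ c i)
    (z : ι → Fin n → ℝ) (hz : ∀ i ∈ t, IsIntVec (z i))
    (δ : Fin n → ℝ) (hδ : IsIntVec δ)
    (heq : ∑ i ∈ t, c i • z i = δ) :
    ∃ m : ℕ, 0 < m ∧ ∃ d : ι → ℕ, (∑ i ∈ t, (d i : ℝ) • z i) = (m : ℝ) • δ := by
  classical
  have hK : ∀ j, ((⌊δ j⌋ : ℤ) : ℝ) = δ j := by
    intro j; obtain ⟨k, hk⟩ := hδ j; rw [hk, Int.floor_intCast]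
  have hZ : ∀ i ∈ t, ∀ j, ((⌊z i j⌋ : ℤ) : ℝ) = z i j := by
    intro i hi j; obtain ⟨k, hk⟩ := hz i hi j; rw [hk, Int.floor_intCast]
  set K : Fin n → ℤ := fun j => ⌊δ j⌋ with hKdef
  set Z : ι → Fin n → ℤ := fun i j => ⌊z i j⌋ with hZdef
  set f : ℕ → Fin n → ℤ := fun N j => N * K j - ∑ i ∈ t, ⌊(N : ℝ) * c i⌋ * Z i j with hfdef
  set B : Fin n → ℤ := fun j => ∑ i ∈ t, |Z i j| with hBdef
  have hδj : ∀ j, δ j = ∑ i ∈ t, c i * z i j := by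
    intro j
    conv_lhs => rw [← heq]
    rw [Finset.sum_apply]
    simp [Pi.smul_apply, smul_eq_mul]
  have fval : ∀ (N : ℕ) (j : Fin n),
      (f N j : ℝ) = ∑ i ∈ t, ((N : ℝ) * c i - ⌊(N : ℝ) * c i⌋) * z i j := by
    intro N j
    have : (f N j : ℝ) = (N : ℝ) * (K j : ℝ) - ∑ i ∈ t, (⌊(N : ℝ) * c i⌋ : ℝ) * (Z i j : ℝ) := by
      simp only [hfdef]
      push_cast
      ring
    rw [this, hK]
    have h1 : ∑ i ∈ t, (⌊(N : ℝ) * c i⌋ : ℝ) * (Z i j : ℝ)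
        = ∑ i ∈ t, (⌊(N : ℝ) * c i⌋ : ℝ) * z i j :=
      Finset.sum_congr rfl fun i hi => by rw [hZ i hi j]
    rw [h1, hδj j, Finset.mul_sum, ← Finset.sum_sub_distrib]
    exact Finset.sum_congr rfl fun i hi => by ring
  have hbound : ∀ (N : ℕ) (j : Fin n), f N j ∈ Set.Icc (-(B j)) (B j) := by
    intro N j
    have habs : |(f N j : ℝ)| ≤ (B j : ℝ) := by
      rw [fval]
      calc |∑ i ∈ t, ((N : ℝ) * c i - ⌊(N : ℝ) * c i⌋) * z i j|
          ≤ ∑ i ∈ t, |((N : ℝ) * c i - ⌊(N : ℝ) * c i⌋) * z i j| := Finset.abs_sum_le_sum_abs _ _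
        _ ≤ ∑ i ∈ t, |z i j| := by
            refine Finset.sum_le_sum fun i hi => ?_
            rw [abs_mul]
            have h0 : |(N : ℝ) * c i - ⌊(N : ℝ) * c i⌋| ≤ 1 := by
              rw [abs_of_nonneg (by nlinarith [Int.floor_le ((N:ℝ) * c i)])]
              nlinarith [Int.lt_floor_add_one ((N:ℝ) * c i)]
            nlinarith [abs_nonneg (z i j)]
        _ = (B j : ℝ) := by
            rw [hBdef]
            push_cast
            exact (Finset.sum_congr rfl fun i hi => by rw [hZ i hi j]).symm
    have : |f N j| ≤ B j := by exact_mod_cast habs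
    exact Set.mem_Icc.2 (abs_le.mp this)
  have hfin : (Set.pi Set.univ fun j => Set.Icc (-(B j)) (B j)).Finite :=
    Set.Finite.pi fun j => Set.finite_Icc _ _
  obtain ⟨N₁, N₂, hlt, hfe⟩ : ∃ N₁ N₂ : ℕ, N₁ < N₂ ∧ f N₁ = f N₂ := by
    haveI := hfin.to_subtype
    obtain ⟨a, b, hab, h⟩ := Finite.exists_ne_map_eq_of_infinite
      (fun N : ℕ => (⟨f N, fun j _ => hbound N j⟩ : {x // x ∈ Set.pi Set.univ fun j => Set.Icc (-(B j)) (B j)}))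
    have h' : f a = f b := congrArg Subtype.val h
    rcases hab.lt_or_gt with hl | hl
    · exact ⟨a, b, hl, h'⟩
    · exact ⟨b, a, hl, h'.symm⟩
  refine ⟨N₂ - N₁, Nat.sub_pos_of_lt hlt, fun i => (⌊(N₂ : ℝ) * c i⌋ - ⌊(N₁ : ℝ) * c i⌋).toNat, ?_⟩
  have hNle : (N₁ : ℝ) ≤ (N₂ : ℝ) := by exact_mod_cast hlt.le
  have hdle : ∀ i ∈ t, ⌊(N₁ : ℝ) * c i⌋ ≤ ⌊(N₂ : ℝ) * c i⌋ := fun i hi =>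
    Int.floor_le_floor (mul_le_mul_of_nonneg_right hNle (hc i hi))
  funext j
  have hint : (∑ i ∈ t, (⌊(N₂ : ℝ) * c i⌋ - ⌊(N₁ : ℝ) * c i⌋) * Z i j)
      = ((N₂ : ℤ) - (N₁ : ℤ)) * K j := by
    have h := congrFun hfe j
    simp only [hfdef] at h
    simp only [sub_mul]
    rw [Finset.sum_sub_distrib]
    linarith [h]
  have hcast : ((∑ i ∈ t, (⌊(N₂ : ℝ) * c i⌋ - ⌊(N₁ : ℝ) * c i⌋) * Z i j : ℤ) : ℝ)
      = (((N₂ : ℤ) - (N₁ : ℤ)) * K j : ℤ) := by exact_mod_cast congrArg (Int.cast : ℤ → ℝ) hint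
  push_cast at hcast
  rw [Finset.sum_apply, Pi.smul_apply]
  simp only [Pi.smul_apply, smul_eq_mul]
  have hLHS : ∑ i ∈ t, ((((⌊(N₂ : ℝ) * c i⌋ - ⌊(N₁ : ℝ) * c i⌋).toNat : ℕ) : ℝ)) * z i j
      = ∑ i ∈ t, ((⌊(N₂ : ℝ) * c i⌋ : ℝ) - (⌊(N₁ : ℝ) * c i⌋ : ℝ)) * (Z i j : ℝ) := by
    refine Finset.sum_congr rfl fun i hi => ?_
    have h1 : (((⌊(N₂ : ℝ) * c i⌋ - ⌊(N₁ : ℝ) * c i⌋).toNat : ℕ) : ℝ)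
        = ((⌊(N₂ : ℝ) * c i⌋ : ℝ) - (⌊(N₁ : ℝ) * c i⌋ : ℝ)) := by
      have := Int.toNat_of_nonneg (sub_nonneg.2 (hdle i hi))
      exact_mod_cast congrArg (Int.cast : ℤ → ℝ) this
    rw [h1, hZ i hi j]
  rw [hLHS, hcast, hK]
  have : ((N₂ - N₁ : ℕ) : ℝ) = (N₂ : ℝ) - (N₁ : ℝ) := by
    rw [Nat.cast_sub hlt.le]
  rw [this]


/-- If `T` is a proper parabolic subset of `ℤⁿ ∖ {0}` (i.e. `T ∪ (−T) = ℤⁿ ∖ {0}`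
and `T` is closed under addition within `ℤⁿ ∖ {0}`), then there is a nonzero
linear functional `λ` on `ℝⁿ` that is nonnegative on `T`. -/
theorem proper_parabolic_lattice_separation
    (n : ℕ) (hn : 1 ≤ n) (T : Set (Fin n → ℝ))
    (hsym : T ∪ (-T) = {γ : Fin n → ℝ | IsIntVec γ ∧ γ ≠ 0})
    (hclosed : ∀ γ ∈ T, ∀ γ' ∈ T, γ + γ' ≠ 0 → γ + γ' ∈ T)
    (hproper : T ≠ {γ : Fin n → ℝ | IsIntVec γ ∧ γ ≠ 0}) :
    ∃ l : (Fin n → ℝ) →ₗ[ℝ] ℝ, l ≠ 0 ∧ ∀ γ ∈ T, 0 ≤ l γ := by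
  classical
  have hTsub : T ⊆ {γ : Fin n → ℝ | IsIntVec γ ∧ γ ≠ 0} := by
    rw [← hsym]; exact Set.subset_union_left
  obtain ⟨δ, hδΔ, hδT⟩ : ∃ δ, δ ∈ {γ : Fin n → ℝ | IsIntVec γ ∧ γ ≠ 0} ∧ δ ∉ T := by
    by_contra h
    push_neg at h
    exact hproper (Set.Subset.antisymm hTsub (fun x hx => h x hx))
  have hδint : IsIntVec δ := hδΔ.1
  have hδ0 : δ ≠ 0 := hδΔ.2
  have hnegδ : -δ ∈ T := by
    have : δ ∈ T ∪ (-T) := by rw [hsym]; exact hδΔ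
    rcases this with h | h
    · exact absurd h hδT
    · exact Set.mem_neg.1 h
  -- key: no positive multiple of δ lies in the convex hull of T
  have hkey : ∀ s : ℝ, 0 < s → s • δ ∉ convexHull ℝ T := by
    intro s hs hmem
    rw [convexHull_eq] at hmem
    obtain ⟨ι, t, w, z, hw0, hw1, hzT, hcm⟩ := hmem
    have hsum : ∑ i ∈ t, w i • z i = s • δ := by
      rw [← hcm, Finset.centerMass, hw1]
      simp
    set c : ι → ℝ := fun i => s⁻¹ * w i with hcdef
    have heq : ∑ i ∈ t, c i • z i = δ := by
      have : ∑ i ∈ t, c i • z i = s⁻¹ • ∑ i ∈ t, w i • z i := by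
        rw [Finset.smul_sum]
        exact Finset.sum_congr rfl fun i hi => mul_smul s⁻¹ (w i) (z i)
      rw [this, hsum, smul_smul, inv_mul_cancel₀ hs.ne', one_smul]
    obtain ⟨m, hm, d, hd⟩ := PPL.exists_nat_combination t c
      (fun i hi => mul_nonneg (inv_nonneg.2 hs.le) (hw0 i hi)) z
      (fun i hi => (hTsub (hzT i hi)).1) δ hδint heq
    set M : Multiset (Fin n → ℝ) := t.val.bind fun i => Multiset.replicate (d i) (z i) with hMdef
    have hMmem : ∀ x ∈ M, x ∈ T := by
      intro x hx
      rw [hMdef, Multiset.mem_bind] at hx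
      obtain ⟨i, hi, hx⟩ := hx
      rw [Multiset.eq_of_mem_replicate hx]
      exact hzT i hi
    have hMsum : M.sum = (m : ℝ) • δ := by
      rw [hMdef, Multiset.sum_bind]
      have h1 : ∀ i ∈ t.val, (Multiset.replicate (d i) (z i)).sum = (d i : ℝ) • z i := by
        intro i _
        rw [Multiset.sum_replicate, Nat.cast_smul_eq_nsmul ℝ]
      rw [Multiset.map_congr rfl h1, ← hd]
      rfl
    have hmne : ((m : ℝ)) ≠ 0 := Nat.cast_ne_zero.2 hm.ne'
    have hmδT : (m : ℝ) • δ ∈ T := by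
      rw [← hMsum]
      exact PPL.multiset_sum_mem hclosed M hMmem
        (by rw [hMsum]; exact smul_ne_zero hmne hδ0)
    set M' : Multiset (Fin n → ℝ) := ((m : ℝ) • δ) ::ₘ Multiset.replicate (m - 1) (-δ) with hM'def
    have hsum' : M'.sum = δ := by
      rw [hM'def, Multiset.sum_cons, Multiset.sum_replicate,
        ← Nat.cast_smul_eq_nsmul ℝ (m - 1) (-δ), Nat.cast_sub hm, Nat.cast_one,
        smul_neg, sub_smul, one_smul]
      abel
    have hM'mem : ∀ x ∈ M', x ∈ T := by
      intro x hx
      rw [hM'def, Multiset.mem_cons] at hx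
      rcases hx with rfl | hx
      · exact hmδT
      · rw [Multiset.eq_of_mem_replicate hx]
        exact hnegδ
    exact hδT (by rw [← hsum']; exact PPL.multiset_sum_mem hclosed M' hM'mem (by rw [hsum']; exact hδ0))
  have hconv : Convex ℝ (convexHull ℝ T) := convex_convexHull ℝ T
  have h0 : (0 : Fin n → ℝ) ∉ interior (convexHull ℝ T) := by
    intro h0
    have hnhds : convexHull ℝ T ∈ nhds (0 : Fin n → ℝ) :=
      mem_nhds_iff.2 ⟨interior _, interior_subset, isOpen_interior, h0⟩
    obtain ⟨r, hr, hball⟩ := Metric.mem_nhds_iff.1 hnhds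
    set s := r / (2 * (‖δ‖ + 1)) with hsdef
    have hδnorm : (0:ℝ) < ‖δ‖ + 1 := by positivity
    have hs : 0 < s := by positivity
    have hmem : s • δ ∈ Metric.ball (0 : Fin n → ℝ) r := by
      rw [Metric.mem_ball, dist_zero_right, norm_smul, Real.norm_eq_abs, abs_of_pos hs]
      have hn0 : (0:ℝ) ≤ ‖δ‖ := norm_nonneg δ
      calc s * ‖δ‖ ≤ s * (‖δ‖ + 1) := by nlinarith
        _ = r / 2 := by rw [hsdef]; field_simp
        _ < r := by linarith
    exact hkey s hs (hball hmem)
  by_cases hspan : affineSpan ℝ T = ⊤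
  · -- nondegenerate case: separation from the nonempty interior
    have hne : (interior (convexHull ℝ T)).Nonempty := by
      rw [hconv.interior_nonempty_iff_affineSpan_eq_top, affineSpan_convexHull]
      exact hspan
    obtain ⟨f, hf⟩ := geometric_hahn_banach_open_point hconv.interior isOpen_interior h0
    simp only [map_zero] at hf
    obtain ⟨x₀, hx₀⟩ := hne
    have hfx₀ : f x₀ < 0 := hf x₀ hx₀
    have hfle : ∀ y ∈ convexHull ℝ T, f y ≤ 0 := by
      intro y hy
      by_contra hpos
      push_neg at hpos
      have hd : 0 < f y - f x₀ := by linarith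
      set a : ℝ := f y / (2 * (f y - f x₀)) with hadef
      have ha : 0 < a := by positivity
      have ha1 : a < 1 := by
        rw [hadef, div_lt_one (by linarith)]
        linarith
      have hmem : a • x₀ + (1 - a) • y ∈ interior (convexHull ℝ T) :=
        hconv.combo_interior_closure_mem_interior hx₀ (subset_closure hy) ha
          (by linarith) (by ring)
      have hlt := hf _ hmem
      rw [map_add, map_smul, map_smul, smul_eq_mul, smul_eq_mul] at hlt
      have hval : a * (f y - f x₀) = f y / 2 := by
        rw [hadef]; field_simp
      nlinarith
    refine ⟨-(f.toLinearMap), ?_, ?_⟩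
    · intro h
      have h' := LinearMap.congr_fun h x₀
      simp only [LinearMap.neg_apply, ContinuousLinearMap.coe_coe, LinearMap.zero_apply] at h'
      linarith
    · intro γ hγ
      simp only [LinearMap.neg_apply, ContinuousLinearMap.coe_coe]
      have := hfle γ (subset_convexHull ℝ T hγ)
      linarith
  · -- degenerate case: T lies in a proper affine subspace
    have hTne : T.Nonempty := by
      have h1 : (fun _ : Fin n => (1:ℝ)) ∈ T ∪ (-T) := by
        rw [hsym]
        refine ⟨fun i => ⟨1, by simp⟩, ?_⟩
        intro h
        have h2 := congrFun h ⟨0, hn⟩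
        simp at h2
      rcases h1 with h | h
      · exact ⟨_, h⟩
      · exact ⟨_, Set.mem_neg.1 h⟩
    obtain ⟨γ₀, hγ₀⟩ := hTne
    have hdir : (affineSpan ℝ T).direction ≠ ⊤ := by
      intro hd
      exact hspan ((AffineSubspace.direction_eq_top_iff_of_nonempty
        ⟨γ₀, subset_affineSpan ℝ T hγ₀⟩).1 hd)
    obtain ⟨f, hf0, hfbot⟩ := Submodule.exists_dual_map_eq_bot_of_lt_top
      (lt_top_iff_ne_top.2 hdir) inferInstance
    have hfzero : ∀ v ∈ (affineSpan ℝ T).direction, f v = 0 := by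
      intro v hv
      have hvv : f v ∈ Submodule.map f (affineSpan ℝ T).direction :=
        Submodule.mem_map_of_mem hv
      rw [hfbot] at hvv
      simpa using hvv
    have hconst : ∀ γ ∈ T, f γ = f γ₀ := by
      intro γ hγ
      have hsub : γ - γ₀ ∈ (affineSpan ℝ T).direction := by
        have := AffineSubspace.vsub_mem_direction
          (subset_affineSpan ℝ T hγ) (subset_affineSpan ℝ T hγ₀)
        simpa [vsub_eq_sub] using this
      have hz := hfzero _ hsub
      rw [map_sub] at hz
      linarith
    rcases le_or_gt 0 (f γ₀) with hc | hc
    · exact ⟨f, hf0, fun γ hγ => by rw [hconst γ hγ]; exact hc⟩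
    · refine ⟨-f, neg_ne_zero.2 hf0, fun γ hγ => ?_⟩
      rw [LinearMap.neg_apply, hconst γ hγ]
      linarith
end

section
/- Let m > 3. Let Δ' = {e_i − e_j : 1 ≤ i ≠ j ≤ 2m} ⊂ ℝ^{2m} (the root system of gl(m|m)), let U ⊆ ℝ^{2m} be the subspace spanned by e₁ + ⋯ + e_m and e_{m+1} + ⋯ + e_{2m}, let V = ℝ^{2m}/U with quotient map π, and let Δ = π(Δ') (the root system of psl(m|m)). Then a subset P ⊆ Δ is parabolic if and only if P = π(P') for some principal parabolic subset P' of Δ'. -/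
/-- The standard basis vector `e i` of `ℝ^{2m}`. -/
def stdBasis (m : ℕ) (i : Fin (2 * m)) : Fin (2 * m) → ℝ := Pi.single i 1

/-- The subspace `U` of `ℝ^{2m}` spanned by `e₁ + ⋯ + e_m` and `e_{m+1} + ⋯ + e_{2m}`. -/
def Upsl (m : ℕ) : Submodule ℝ (Fin (2 * m) → ℝ) :=
  Submodule.span ℝ
    ({fun i : Fin (2 * m) => if (i : ℕ) < m then (1 : ℝ) else 0,
      fun i : Fin (2 * m) => if (i : ℕ) < m then (0 : ℝ) else 1} : Set (Fin (2 * m) → ℝ))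

/-- The root system of `gl(m|m)`: all `e_i − e_j`, `i ≠ j`. -/
def glRoots (m : ℕ) : Set (Fin (2 * m) → ℝ) :=
  {x | ∃ i j : Fin (2 * m), i ≠ j ∧ x = stdBasis m i - stdBasis m j}

lemma root_mk {m : ℕ} {i j : Fin (2 * m)} (h : i ≠ j) :
    stdBasis m i - stdBasis m j ∈ glRoots m := ⟨i, j, h, rfl⟩

lemma neg_root {m : ℕ} {a : Fin (2 * m) → ℝ} (ha : a ∈ glRoots m) : -a ∈ glRoots m := by
  obtain ⟨i, j, hij, rfl⟩ := ha
  exact ⟨j, i, hij.symm, by abel⟩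

lemma root_sum_mem {m : ℕ} {a : Fin (2 * m) → ℝ} (ha : a ∈ glRoots m)
    (s : Finset (Fin (2 * m))) :
    ∑ i ∈ s, a i = -1 ∨ ∑ i ∈ s, a i = 0 ∨ ∑ i ∈ s, a i = 1 := by
  obtain ⟨i, j, hij, rfl⟩ := ha
  simp only [stdBasis, Pi.sub_apply, Finset.sum_sub_distrib, Finset.sum_pi_single']
  split_ifs <;> norm_num

lemma root_sum_bounds {m : ℕ} {a : Fin (2 * m) → ℝ} (ha : a ∈ glRoots m)
    (s : Finset (Fin (2 * m))) :
    -1 ≤ ∑ i ∈ s, a i ∧ ∑ i ∈ s, a i ≤ 1 := by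
  rcases root_sum_mem ha s with h | h | h <;> rw [h] <;> norm_num

lemma root_int {m : ℕ} {a : Fin (2 * m) → ℝ} (ha : a ∈ glRoots m) (p : Fin (2 * m)) :
    ∃ k : ℤ, a p = k := by
  have := root_sum_mem ha {p}
  rw [Finset.sum_singleton] at this
  rcases this with h | h | h
  exacts [⟨-1, by rw [h]; norm_num⟩, ⟨0, by rw [h]; norm_num⟩, ⟨1, by rw [h]; norm_num⟩]

lemma zero_of_mem_Upsl {m : ℕ} (hm : 3 < m) {u : Fin (2 * m) → ℝ} (hu : u ∈ Upsl m)
    (hsum : ∀ s : Finset (Fin (2 * m)), -3 ≤ ∑ i ∈ s, u i ∧ ∑ i ∈ s, u i ≤ 3)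
    (hint : ∀ p : Fin (2 * m), ∃ k : ℤ, u p = k) : u = 0 := by
  rw [Upsl, Submodule.mem_span_pair] at hu
  obtain ⟨x, y, hxy⟩ := hu
  have hux : ∀ p : Fin (2 * m), (p : ℕ) < m → u p = x := by
    intro p hp
    rw [← hxy]
    simp [hp]
  have huy : ∀ p : Fin (2 * m), ¬ (p : ℕ) < m → u p = y := by
    intro p hp
    rw [← hxy]
    simp [hp]
  have hx0 : x = 0 := by
    obtain ⟨k, hk⟩ := hint ⟨0, by omega⟩
    have hxk : x = (k : ℝ) := by rw [← hk, hux ⟨0, by omega⟩ (by simpa using by omega)]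
    have hs : ∑ i ∈ ({⟨0, by omega⟩, ⟨1, by omega⟩, ⟨2, by omega⟩, ⟨3, by omega⟩} :
        Finset (Fin (2 * m))), u i = 4 * x := by
      rw [Finset.sum_insert (by simp [Fin.ext_iff]), Finset.sum_insert (by simp [Fin.ext_iff]),
        Finset.sum_insert (by simp [Fin.ext_iff]), Finset.sum_singleton]
      rw [hux _ (by simpa using by omega), hux _ (by simpa using by omega),
        hux _ (by simpa using by omega), hux _ (by simpa using by omega)]
      ring
    obtain ⟨h1, h2⟩ := hsum _
    rw [hs, hxk] at h1 h2
    have h1' : (-3 : ℤ) ≤ 4 * k := by exact_mod_cast h1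
    have h2' : (4 : ℤ) * k ≤ 3 := by exact_mod_cast h2
    rw [hxk]
    norm_num
    omega
  have hy0 : y = 0 := by
    obtain ⟨k, hk⟩ := hint ⟨m, by omega⟩
    have hxk : y = (k : ℝ) := by rw [← hk, huy ⟨m, by omega⟩ (by simp)]
    have hs : ∑ i ∈ ({⟨m, by omega⟩, ⟨m + 1, by omega⟩, ⟨m + 2, by omega⟩, ⟨m + 3, by omega⟩} :
        Finset (Fin (2 * m))), u i = 4 * y := by
      rw [Finset.sum_insert (by simp [Fin.ext_iff]), Finset.sum_insert (by simp [Fin.ext_iff]),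
        Finset.sum_insert (by simp [Fin.ext_iff]), Finset.sum_singleton]
      rw [huy _ (by simp), huy _ (by simp), huy _ (by simp), huy _ (by simp)]
      ring
    obtain ⟨h1, h2⟩ := hsum _
    rw [hs, hxk] at h1 h2
    have h1' : (-3 : ℤ) ≤ 4 * k := by exact_mod_cast h1
    have h2' : (4 : ℤ) * k ≤ 3 := by exact_mod_cast h2
    rw [hxk]
    norm_num
    omega
  rw [← hxy, hx0, hy0]
  simp

lemma mkQ_inj_on_roots {m : ℕ} (hm : 3 < m) {a c : Fin (2 * m) → ℝ}
    (ha : a ∈ glRoots m) (hc : c ∈ glRoots m)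
    (h : (Upsl m).mkQ a = (Upsl m).mkQ c) : a = c := by
  have hmem : a - c ∈ Upsl m := by
    rwa [Submodule.mkQ_apply, Submodule.mkQ_apply, Submodule.Quotient.eq] at h
  have h0 : a - c = 0 := by
    refine zero_of_mem_Upsl hm hmem (fun s => ?_) (fun p => ?_)
    · obtain ⟨ha1, ha2⟩ := root_sum_bounds ha s
      obtain ⟨hc1, hc2⟩ := root_sum_bounds hc s
      simp only [Pi.sub_apply, Finset.sum_sub_distrib]
      constructor <;> linarith
    · obtain ⟨ka, hka⟩ := root_int ha p
      obtain ⟨kc, hkc⟩ := root_int hc p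
      exact ⟨ka - kc, by simp [Pi.sub_apply, hka, hkc]⟩
  have := sub_eq_zero.mp h0
  exact this

lemma mkQ_sum_roots {m : ℕ} (hm : 3 < m) {a b c : Fin (2 * m) → ℝ}
    (ha : a ∈ glRoots m) (hb : b ∈ glRoots m) (hc : c ∈ glRoots m)
    (h : (Upsl m).mkQ a + (Upsl m).mkQ b = (Upsl m).mkQ c) : a + b = c := by
  have h' : (Upsl m).mkQ (a + b) = (Upsl m).mkQ c := by rw [map_add, h]
  have hmem : (a + b) - c ∈ Upsl m := by
    rwa [Submodule.mkQ_apply, Submodule.mkQ_apply, Submodule.Quotient.eq] at h'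
  have h0 : (a + b) - c = 0 := by
    refine zero_of_mem_Upsl hm hmem (fun s => ?_) (fun p => ?_)
    · obtain ⟨ha1, ha2⟩ := root_sum_bounds ha s
      obtain ⟨hb1, hb2⟩ := root_sum_bounds hb s
      obtain ⟨hc1, hc2⟩ := root_sum_bounds hc s
      simp only [Pi.sub_apply, Pi.add_apply, Finset.sum_sub_distrib, Finset.sum_add_distrib]
      constructor <;> linarith
    · obtain ⟨ka, hka⟩ := root_int ha p
      obtain ⟨kb, hkb⟩ := root_int hb p
      obtain ⟨kc, hkc⟩ := root_int hc p
      exact ⟨ka + kb - kc, by simp [Pi.sub_apply, Pi.add_apply, hka, hkb, hkc]⟩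
  exact sub_eq_zero.mp h0

/-- The linear functional `x ↦ ∑ i, w i * x i`. -/
def wfun {n : ℕ} (w : Fin n → ℝ) : (Fin n → ℝ) →ₗ[ℝ] ℝ where
  toFun x := ∑ i, w i * x i
  map_add' x y := by simp [mul_add, Finset.sum_add_distrib]
  map_smul' r x := by
    simp only [RingHom.id_apply, smul_eq_mul, Pi.smul_apply, Finset.mul_sum]
    exact Finset.sum_congr rfl fun i _ => by ring

lemma wfun_root {m : ℕ} (w : Fin (2 * m) → ℝ) (i j : Fin (2 * m)) :
    wfun w (stdBasis m i - stdBasis m j) = w i - w j := by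
  have hsingle : ∀ p : Fin (2 * m), wfun w (stdBasis m p) = w p := by
    intro p
    simp only [wfun, LinearMap.coe_mk, AddHom.coe_mk, stdBasis]
    rw [Finset.sum_eq_single p]
    · simp
    · intro b _ hb
      simp [Pi.single_apply, hb.symm]
    · simp
  rw [map_sub, hsingle, hsingle]

/-- For `m > 3`, a subset `P` of the root system `Δ` of `psl(m|m)` (the image of
the roots `Δ'` of `gl(m|m)` in `ℝ^{2m}/U`) is parabolic if and only if `P` is the
image of a principal parabolic subset of `Δ'`. -/
theorem psl_parabolic_iff_image_principal (m : ℕ) (hm : 3 < m)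
    (P : Set ((Fin (2 * m) → ℝ) ⧸ Upsl m)) (hP : P ⊆ (Upsl m).mkQ '' glRoots m) :
    IsParabolicIn ((Upsl m).mkQ '' glRoots m) P ↔
      ∃ P' : Set (Fin (2 * m) → ℝ),
        IsPrincipalParabolicIn (glRoots m) P' ∧ P = (Upsl m).mkQ '' P' := by
  classical
  constructor
  · rintro ⟨hU, hC⟩
    set P' : Set (Fin (2 * m) → ℝ) :=
      {x | x ∈ glRoots m ∧ (Upsl m).mkQ x ∈ P} with hP'def
    have hPim : P = (Upsl m).mkQ '' P' := by
      ext z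
      constructor
      · intro hz
        obtain ⟨α, hα, rfl⟩ := hP hz
        exact ⟨α, ⟨hα, hz⟩, rfl⟩
      · rintro ⟨α, ⟨hα, hαP⟩, rfl⟩
        exact hαP
    set R : Fin (2 * m) → Fin (2 * m) → Prop :=
      fun i j => i = j ∨ stdBasis m i - stdBasis m j ∈ P' with hRdef
    have Rrefl : ∀ i, R i i := fun i => Or.inl rfl
    have Rtotal : ∀ i j, R i j ∨ R j i := by
      intro i j
      by_cases hij : i = j
      · exact Or.inl (Or.inl hij)
      have hroot := root_mk hij
      have hmem : (Upsl m).mkQ (stdBasis m i - stdBasis m j) ∈ P ∪ (-P) := by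
        rw [hU]; exact ⟨_, hroot, rfl⟩
      rcases hmem with h | h
      · exact Or.inl (Or.inr ⟨hroot, h⟩)
      · refine Or.inr (Or.inr ⟨root_mk (Ne.symm hij), ?_⟩)
        rw [Set.mem_neg] at h
        have : stdBasis m j - stdBasis m i = -(stdBasis m i - stdBasis m j) := by abel
        rw [this, map_neg]
        exact h
    have Rtrans : ∀ i j k, R i j → R j k → R i k := by
      rintro i j k (rfl | hij) h2
      · exact h2
      rcases h2 with rfl | hjk
      · exact Or.inr hij
      by_cases hik : i = k
      · exact Or.inl hik
      refine Or.inr ⟨root_mk hik, ?_⟩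
      have hΔ : (Upsl m).mkQ (stdBasis m i - stdBasis m k) ∈ (Upsl m).mkQ '' glRoots m :=
        ⟨_, root_mk hik, rfl⟩
      have heq : (Upsl m).mkQ (stdBasis m i - stdBasis m j)
          + (Upsl m).mkQ (stdBasis m j - stdBasis m k)
          = (Upsl m).mkQ (stdBasis m i - stdBasis m k) := by
        rw [← map_add]
        congr 1
        abel
      have := hC _ hij.2 _ hjk.2 (by rw [heq]; exact hΔ)
      rwa [heq] at this
    set w : Fin (2 * m) → ℝ :=
      fun i => ((Finset.univ.filter (fun j => R i j)).card : ℝ) with hwdef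
    have hRw : ∀ i j, R i j ↔ w j ≤ w i := by
      intro i j
      constructor
      · intro h
        have hsub : Finset.univ.filter (fun k => R j k) ⊆
            Finset.univ.filter (fun k => R i k) := by
          intro k hk
          rw [Finset.mem_filter] at hk ⊢
          exact ⟨hk.1, Rtrans i j k h hk.2⟩
        simp only [hwdef]
        exact_mod_cast Finset.card_le_card hsub
      · intro h
        by_contra hn
        have hji : R j i := (Rtotal i j).resolve_left hn
        have hsub : Finset.univ.filter (fun k => R i k) ⊆
            Finset.univ.filter (fun k => R j k) := by
          intro k hk
          rw [Finset.mem_filter] at hk ⊢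
          exact ⟨hk.1, Rtrans j i k hji hk.2⟩
        have hss := (Finset.ssubset_iff_of_subset hsub).mpr
          ⟨j, by simp [Rrefl j], by simp [hn]⟩
        have hlt := Finset.card_lt_card hss
        have : w i < w j := by simp only [hwdef]; exact_mod_cast hlt
        linarith
    refine ⟨P', ⟨wfun w, ?_⟩, hPim⟩
    ext α
    constructor
    · rintro ⟨hroot, hmk⟩
      refine ⟨hroot, ?_⟩
      obtain ⟨i, j, hij, rfl⟩ := hroot
      rw [wfun_root]
      have hRij : R i j := Or.inr ⟨root_mk hij, hmk⟩
      have := (hRw i j).mp hRij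
      linarith
    · rintro ⟨hroot, hw⟩
      obtain ⟨i, j, hij, rfl⟩ := hroot
      rw [wfun_root] at hw
      have hRij : R i j := (hRw i j).mpr (by linarith)
      rcases hRij with rfl | h
      · exact absurd rfl hij
      · exact h
  · rintro ⟨P', ⟨l, hl⟩, rfl⟩
    constructor
    · ext z
      constructor
      · rintro (⟨α, hα, rfl⟩ | hz)
        · rw [hl] at hα
          exact ⟨α, hα.1, rfl⟩
        · rw [Set.mem_neg] at hz
          obtain ⟨α, hα, hmk⟩ := hz
          rw [hl] at hα
          refine ⟨-α, neg_root hα.1, ?_⟩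
          rw [map_neg, hmk, neg_neg]
      · rintro ⟨α, hα, rfl⟩
        by_cases h : 0 ≤ l α
        · exact Or.inl ⟨α, by rw [hl]; exact ⟨hα, h⟩, rfl⟩
        · refine Or.inr ?_
          rw [Set.mem_neg, ← map_neg]
          refine ⟨-α, ?_, rfl⟩
          rw [hl]
          refine ⟨neg_root hα, ?_⟩
          rw [map_neg]
          linarith
    · rintro x ⟨a, haP, rfl⟩ y ⟨b, hbP, rfl⟩ hsum
      obtain ⟨c, hc, hmkc⟩ := hsum
      rw [hl] at haP hbP
      have habc : a + b = c := mkQ_sum_roots hm haP.1 hbP.1 hc hmkc.symm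
      refine ⟨c, ?_, hmkc⟩
      rw [hl]
      refine ⟨hc, ?_⟩
      rw [← habc, map_add]
      have h1 := haP.2
      have h2 := hbP.2
      linarith
end
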